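/- (Erdős–Gallai) Let k be a nonnegative integer and let G be a simple graph on n vertices. If the number of edges of G is strictly greater than k·n/2, then G contains a path on k + 2 vertices (i.e., k + 2 distinct vertices v_1, ..., v_{k+2} such that v_i v_{i+1} is an edge for each 1 ≤ i ≤ k+1). -/

import Mathlib

open Finset

universe u

variable {V : Type u}

/-- A path with `m` vertices, encoded as a function on `ℕ`. -/
def NPath (G : SimpleGraph V) (m : ℕ) (w : ℕ → V) : Prop :=
  (∀ i < m, ∀ j < m, w i = w j → i = j) ∧ ∀ i, i + 1 < m → G.Adj (w i) (w (i + 1))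

lemma NPath.le_card [Fintype V] {G : SimpleGraph V} {m : ℕ} {w : ℕ → V} (h : NPath G m w) :
    m ≤ Fintype.card V := by
  have hinj : Function.Injective (fun i : Fin m => w i) := by
    intro i j hij
    exact Fin.ext (h.1 i i.2 j j.2 hij)
  simpa using Fintype.card_le_of_injective _ hinj

lemma NPath.mono {G : SimpleGraph V} {m m' : ℕ} {w : ℕ → V} (hm : m' ≤ m) (h : NPath G m w) :
    NPath G m' w :=
  ⟨fun i hi j hj => h.1 i (lt_of_lt_of_le hi hm) j (lt_of_lt_of_le hj hm),
   fun i hi => h.2 i (lt_of_lt_of_le hi hm)⟩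

lemma NPath.prepend {G : SimpleGraph V} {m : ℕ} {w : ℕ → V} (h : NPath G m w) {x : V}
    (hx : ∀ i < m, x ≠ w i) (hadj : G.Adj x (w 0)) :
    NPath G (m + 1) (fun i => if i = 0 then x else w (i - 1)) := by
  constructor
  · intro i hi j hj hij
    simp only at hij
    split_ifs at hij with h1 h2 h2
    · omega
    · exact absurd hij (hx (j - 1) (by omega))
    · exact absurd hij.symm (hx (i - 1) (by omega))
    · have := h.1 (i - 1) (by omega) (j - 1) (by omega) hij; omega
  · intro i hi
    simp only
    rcases Nat.eq_zero_or_pos i with rfl | hpos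
    · simpa using hadj
    · rw [if_neg (by omega), if_neg (by omega)]
      have h2 := h.2 (i - 1) (by omega)
      have e : i - 1 + 1 = i := by omega
      rw [e] at h2
      have e2 : i + 1 - 1 = i := by omega
      rw [e2]
      exact h2

lemma NPath.rev {G : SimpleGraph V} {m : ℕ} {w : ℕ → V} (h : NPath G m w) :
    NPath G m (fun i => w (m - 1 - i)) := by
  constructor
  · intro i hi j hj hij
    have := h.1 (m - 1 - i) (by omega) (m - 1 - j) (by omega) hij
    omega
  · intro i hi
    have h2 := h.2 (m - 1 - i - 1) (by omega)
    have e : m - 1 - i - 1 + 1 = m - 1 - i := by omega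
    rw [e] at h2
    simp only
    have e2 : m - 1 - (i + 1) = m - 1 - i - 1 := by omega
    rw [e2]
    exact h2.symm

lemma endpoint_mem {G : SimpleGraph V} {m : ℕ} {w : ℕ → V} (h : NPath G m w) (hm : 1 ≤ m)
    (hmax : ¬ ∃ w' : ℕ → V, NPath G (m + 1) w') {y : V} (hadj : G.Adj y (w 0)) :
    ∃ i < m, y = w i := by
  by_contra hc
  push_neg at hc
  exact hmax ⟨_, h.prepend (fun i hi => hc i hi) hadj⟩

/-- The cycle obtained from a path by the rotation trick. -/
def cyc (L j : ℕ) (w : ℕ → V) (i : ℕ) : V := if i ≤ j then w i else w (L + j - i)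

lemma cyc_mem {L j : ℕ} (hj : j + 1 < L) {w : ℕ → V} :
    ∀ i < L, ∃ a < L, cyc L j w i = w a := by
  intro i hi
  unfold cyc
  split_ifs with h1
  · exact ⟨i, hi, rfl⟩
  · exact ⟨L + j - i, by omega, rfl⟩

lemma cyc_surj {L j : ℕ} (hj : j + 1 < L) {w : ℕ → V} :
    ∀ a < L, ∃ i < L, cyc L j w i = w a := by
  intro a ha
  by_cases h1 : a ≤ j
  · exact ⟨a, ha, by simp [cyc, h1]⟩
  · refine ⟨L + j - a, by omega, ?_⟩
    have hn : ¬ (L + j - a ≤ j) := by omega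
    simp only [cyc, if_neg hn]
    congr 1
    omega

lemma cyc_inj {G : SimpleGraph V} {L j : ℕ} {w : ℕ → V} (h : NPath G L w) (hj : j + 1 < L) :
    ∀ i < L, ∀ i' < L, cyc L j w i = cyc L j w i' → i = i' := by
  intro i hi i' hi' he
  unfold cyc at he
  split_ifs at he with h1 h2 h2
  · exact h.1 i hi i' hi' he
  · have := h.1 i hi (L + j - i') (by omega) he; omega
  · have := h.1 (L + j - i) (by omega) i' hi' he; omega
  · have := h.1 (L + j - i) (by omega) (L + j - i') (by omega) he; omega

lemma cyc_adj {G : SimpleGraph V} {L j : ℕ} {w : ℕ → V} (h : NPath G L w) (hj : j + 1 < L)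
    (hA : G.Adj (w 0) (w (j + 1))) (hB : G.Adj (w (L - 1)) (w j)) :
    ∀ i < L, G.Adj (cyc L j w i) (cyc L j w ((i + 1) % L)) := by
  intro i hi
  by_cases hiL : i + 1 < L
  · rw [Nat.mod_eq_of_lt hiL]
    by_cases h1 : i + 1 ≤ j
    · simp only [cyc, if_pos (by omega : i ≤ j), if_pos h1]
      exact h.2 i hiL
    · by_cases h2 : i ≤ j
      · have hij : i = j := by omega
        subst hij
        simp only [cyc, if_pos le_rfl, if_neg h1]
        have e : L + i - (i + 1) = L - 1 := by omega
        rw [e]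
        exact hB.symm
      · simp only [cyc, if_neg h2, if_neg (by omega : ¬ i + 1 ≤ j)]
        have e : L + j - i = (L + j - (i + 1)) + 1 := by omega
        rw [e]
        exact (h.2 (L + j - (i + 1)) (by omega)).symm
  · have hie : i = L - 1 := by omega
    have hmod : (i + 1) % L = 0 := by
      rw [hie]
      have e : L - 1 + 1 = L := by omega
      rw [e, Nat.mod_self]
    rw [hmod]
    subst hie
    simp only [cyc, if_neg (by omega : ¬ L - 1 ≤ j), if_pos (Nat.zero_le j)]
    have e : L + j - (L - 1) = j + 1 := by omega
    rw [e]
    exact hA.symm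

lemma rotate {G : SimpleGraph V} {L j : ℕ} {w : ℕ → V} (h : NPath G L w) (hj : j + 1 < L)
    (hA : G.Adj (w 0) (w (j + 1))) (hB : G.Adj (w (L - 1)) (w j))
    {t : ℕ} (ht : t < L) {x : V} (hx : ∀ a < L, x ≠ w a)
    (hadj : G.Adj x (cyc L j w t)) :
    NPath G (L + 1) (fun s => if s = 0 then x else cyc L j w ((t + (s - 1)) % L)) := by
  have hL : 0 < L := by omega
  constructor
  · intro s hs s' hs' he
    simp only at he
    split_ifs at he with h1 h2 h2
    · omega
    · obtain ⟨a, ha, hea⟩ := cyc_mem hj ((t + (s' - 1)) % L) (Nat.mod_lt _ hL)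
      exact absurd (he.trans hea) (hx a ha)
    · obtain ⟨a, ha, hea⟩ := cyc_mem hj ((t + (s - 1)) % L) (Nat.mod_lt _ hL)
      exact absurd (he.symm.trans hea) (hx a ha)
    · have hmod := cyc_inj h hj _ (Nat.mod_lt _ hL) _ (Nat.mod_lt _ hL) he
      have hmod' : Nat.ModEq L (t + (s - 1)) (t + (s' - 1)) := hmod
      have h3 : Nat.ModEq L (s - 1) (s' - 1) := Nat.ModEq.add_left_cancel' t hmod'
      have h4 : (s - 1) % L = (s' - 1) % L := h3
      rw [Nat.mod_eq_of_lt (by omega), Nat.mod_eq_of_lt (by omega)] at h4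
      omega
  · intro i hi
    simp only
    rcases Nat.eq_zero_or_pos i with rfl | hpos
    · rw [if_pos rfl, if_neg (by omega)]
      simpa [Nat.mod_eq_of_lt ht] using hadj
    · rw [if_neg (by omega), if_neg (by omega)]
      have hc := cyc_adj h hj hA hB ((t + (i - 1)) % L) (Nat.mod_lt _ hL)
      have e : ((t + (i - 1)) % L + 1) % L = (t + (i + 1 - 1)) % L := by
        rw [Nat.mod_add_mod]
        congr 1
        omega
      rw [e] at hc
      exact hc

lemma aux : ∀ (n : ℕ) (V : Type u) [Fintype V] (k : ℕ) (G : SimpleGraph V) [DecidableRel G.Adj],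
    Fintype.card V ≤ n → k * Fintype.card V < ∑ x, G.degree x →
    ∃ w : ℕ → V, NPath G (k + 2) w := by
  intro n
  induction n with
  | zero =>
    intro V _ k G _ hcard hdeg
    have h0 : Fintype.card V = 0 := by omega
    haveI := Fintype.card_eq_zero_iff.mp h0
    rw [Finset.univ_eq_empty, Finset.sum_empty] at hdeg
    omega
  | succ n ih =>
    intro V _ k G _ hcard hdeg
    classical
    by_cases hle : Fintype.card V ≤ n
    · exact ih V k G hle hdeg
    set N := Fintype.card V with hNdef
    set S1 := ∑ x, G.degree x with hS1
    have hN : N = n + 1 := by omega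
    by_cases hlow : ∃ u, 2 * G.degree u ≤ k
    · obtain ⟨u, hu⟩ := hlow
      let G' : SimpleGraph {x : V // x ≠ u} := G.comap Subtype.val
      haveI : DecidableRel G'.Adj := Classical.decRel _
      have hfilt : (univ.filter (fun x : V => x ≠ u)) = univ.erase u := by
        ext y; simp [Finset.mem_erase]
      have hcard' : Fintype.card {x : V // x ≠ u} = N - 1 := by
        rw [Fintype.card_subtype, hfilt, Finset.card_erase_of_mem (mem_univ u), Finset.card_univ]
      have hdegpt : ∀ x : {x : V // x ≠ u},
          G.degree (x : V) ≤ G'.degree x + (if G.Adj u (x : V) then 1 else 0) := by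
        intro x
        have hsub : G.neighborFinset (x : V) ⊆
            (G'.neighborFinset x).image Subtype.val ∪ (if G.Adj u (x : V) then {u} else ∅) := by
          intro y hy
          rw [SimpleGraph.mem_neighborFinset] at hy
          rcases eq_or_ne y u with rfl | hyu
          · rw [Finset.mem_union, if_pos hy.symm]
            exact Or.inr (Finset.mem_singleton_self y)
          · refine Finset.mem_union_left _ ?_
            refine Finset.mem_image.mpr ⟨⟨y, hyu⟩, ?_, rfl⟩
            rw [SimpleGraph.mem_neighborFinset]
            exact hy
        calc G.degree (x : V) ≤ _ := Finset.card_le_card hsub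
          _ ≤ ((G'.neighborFinset x).image Subtype.val).card
                + (if G.Adj u (x : V) then ({u} : Finset V) else ∅).card :=
              Finset.card_union_le _ _
          _ ≤ G'.degree x + (if G.Adj u (x : V) then 1 else 0) := by
              rw [Finset.card_image_of_injective _ Subtype.val_injective]
              refine add_le_add le_rfl ?_
              split_ifs <;> simp
      have hsum1 : ∑ y ∈ univ.filter (fun x : V => x ≠ u), G.degree y
          = ∑ x : {x : V // x ≠ u}, G.degree (x : V) :=
        Finset.sum_subtype _ (by simp) _
      have hsplit := Finset.sum_filter_add_sum_filter_not univ (fun x : V => x ≠ u)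
        (fun y => G.degree y)
      have hfilt2 : univ.filter (fun x : V => ¬ x ≠ u) = {u} := by
        ext y; simp
      have hsplit' : (∑ y ∈ univ.filter (fun x : V => x ≠ u), G.degree y) + G.degree u = S1 := by
        rw [hS1, ← hsplit, hfilt2, Finset.sum_singleton]
      have hnbr : (univ.filter (fun x : V => x ≠ u)).filter (fun y => G.Adj u y)
          = G.neighborFinset u := by
        ext y
        simp only [Finset.mem_filter, Finset.mem_univ, true_and, SimpleGraph.mem_neighborFinset]
        exact ⟨fun h => h.2, fun h => ⟨h.ne', h⟩⟩
      have hite : ∑ x : {x : V // x ≠ u}, (if G.Adj u (x : V) then 1 else 0) = G.degree u := by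
        rw [← Finset.sum_subtype (univ.filter (fun x : V => x ≠ u)) (by simp)
          (fun y => if G.Adj u y then 1 else 0), ← Finset.card_filter, hnbr]
        rfl
      have hmain : ∑ x : {x : V // x ≠ u}, G.degree (x : V)
          ≤ (∑ x : {x : V // x ≠ u}, G'.degree x) + G.degree u := by
        calc ∑ x : {x : V // x ≠ u}, G.degree (x : V)
            ≤ ∑ x : {x : V // x ≠ u}, (G'.degree x + (if G.Adj u (x : V) then 1 else 0)) :=
              Finset.sum_le_sum (fun x _ => hdegpt x)
          _ = (∑ x : {x : V // x ≠ u}, G'.degree x)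
                + ∑ x : {x : V // x ≠ u}, (if G.Adj u (x : V) then 1 else 0) :=
              Finset.sum_add_distrib
          _ = _ := by rw [hite]
      have h1 : k * (N - 1) + k = k * N := by
        have e : (N - 1) + 1 = N := by omega
        calc k * (N - 1) + k = k * ((N - 1) + 1) := by ring
          _ = k * N := by rw [e]
      have hgoal : k * Fintype.card {x : V // x ≠ u} < ∑ x : {x : V // x ≠ u}, G'.degree x := by
        rw [hcard']
        set q1 := k * (N - 1) with hq1
        set q2 := k * N with hq2
        omega
      obtain ⟨w, hw⟩ := ih _ k G' (by rw [hcard']; omega) hgoal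
      exact ⟨fun i => (w i : V),
        fun i hi j hj he => hw.1 i hi j hj (Subtype.ext he),
        fun i hi => hw.2 i hi⟩
    · push_neg at hlow
      have hedge : ∃ x y, G.Adj x y := by
        by_contra hc
        push_neg at hc
        have hz : S1 = 0 := by
          rw [hS1]
          refine Finset.sum_eq_zero fun x _ => ?_
          show (G.neighborFinset x).card = 0
          rw [Finset.card_eq_zero]
          ext y
          simp only [SimpleGraph.mem_neighborFinset, Finset.notMem_empty, iff_false]
          exact hc x y
        omega
      obtain ⟨x0, y0, hxy⟩ := hedge
      have hne := G.ne_of_adj hxy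
      set P : ℕ → Prop := fun m => ∃ w : ℕ → V, NPath G m w with hPdef
      have hbase : P 2 := by
        refine ⟨fun i => if i = 0 then x0 else y0, ?_, ?_⟩
        · intro i hi j hj he
          simp only at he
          split_ifs at he with ha hb hb
          · omega
          · exact absurd he hne
          · exact absurd he.symm hne
          · omega
        · intro i hi
          have hi0 : i = 0 := by omega
          subst hi0
          simpa using hxy
      have hPle : ∀ m, P m → m ≤ N := by
        intro m hm
        obtain ⟨w', hw'⟩ := hm
        exact hw'.le_card.trans_eq hNdef.symm
      have h2N : 2 ≤ N := hPle 2 hbase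
      set L := Nat.findGreatest P N with hLdef
      have hPL : P L := Nat.findGreatest_spec h2N hbase
      have hL2 : 2 ≤ L := Nat.le_findGreatest h2N hbase
      have hmax : ¬ P (L + 1) := by
        intro hP
        have := Nat.le_findGreatest (hPle _ hP) hP
        omega
      obtain ⟨w, hw⟩ := hPL
      by_cases hdone : k + 2 ≤ L
      · exact ⟨w, hw.mono hdone⟩
      have hLk : L ≤ k + 1 := by omega
      set T := (Finset.range L).image w with hT
      have hwinj : Set.InjOn w ↑(Finset.range L) := by
        intro i hi j hj he
        exact hw.1 i (by simpa using hi) j (by simpa using hj) he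
      have hTcard : T.card = L := by
        rw [hT, Finset.card_image_of_injOn hwinj, Finset.card_range]
      have hmemT : ∀ y, y ∈ T ↔ ∃ i < L, y = w i := by
        intro y
        rw [hT]
        simp only [Finset.mem_image, Finset.mem_range]
        constructor
        · rintro ⟨i, hi, rfl⟩; exact ⟨i, hi, rfl⟩
        · rintro ⟨i, hi, rfl⟩; exact ⟨i, hi, rfl⟩
      have hend0 : ∀ y, G.Adj y (w 0) → y ∈ T := by
        intro y hy
        rw [hmemT]
        exact endpoint_mem hw (by omega) hmax hy
      have hendL : ∀ y, G.Adj y (w (L - 1)) → y ∈ T := by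
        intro y hy
        have hrev := hw.rev
        have h0 : (fun i => w (L - 1 - i)) 0 = w (L - 1) := by simp
        obtain ⟨i, hi, he⟩ := endpoint_mem hrev (by omega) hmax
          (show G.Adj y (w (L - 1 - 0)) by simpa using hy)
        rw [hmemT]
        exact ⟨L - 1 - i, by omega, he⟩
      set A := (Finset.range L).filter (fun i => G.Adj (w 0) (w i)) with hAdef
      set B := (Finset.range L).filter (fun i => G.Adj (w (L - 1)) (w i)) with hBdef
      have hAN : G.neighborFinset (w 0) = A.image w := by
        ext y
        simp only [SimpleGraph.mem_neighborFinset, hAdef, Finset.mem_image, Finset.mem_filter,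
          Finset.mem_range]
        constructor
        · intro hy
          obtain ⟨i, hi, rfl⟩ := (hmemT y).mp (hend0 y hy.symm)
          exact ⟨i, ⟨hi, hy⟩, rfl⟩
        · rintro ⟨i, ⟨hi, ha⟩, rfl⟩; exact ha
      have hBN : G.neighborFinset (w (L - 1)) = B.image w := by
        ext y
        simp only [SimpleGraph.mem_neighborFinset, hBdef, Finset.mem_image, Finset.mem_filter,
          Finset.mem_range]
        constructor
        · intro hy
          obtain ⟨i, hi, rfl⟩ := (hmemT y).mp (hendL y hy.symm)
          exact ⟨i, ⟨hi, hy⟩, rfl⟩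
        · rintro ⟨i, ⟨hi, ha⟩, rfl⟩; exact ha
      have hAcard : A.card = G.degree (w 0) := by
        have hinjA : Set.InjOn w ↑A := hwinj.mono (by intro i hi; simp only [hAdef] at hi; simp_all)
        show A.card = (G.neighborFinset (w 0)).card
        rw [hAN, Finset.card_image_of_injOn hinjA]
      have hBcard : B.card = G.degree (w (L - 1)) := by
        have hinjB : Set.InjOn w ↑B := hwinj.mono (by intro i hi; simp only [hBdef] at hi; simp_all)
        show B.card = (G.neighborFinset (w (L - 1))).card
        rw [hBN, Finset.card_image_of_injOn hinjB]
      have hsubA : A ⊆ Finset.Ico 1 L := by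
        intro i hi
        simp only [hAdef, Finset.mem_filter, Finset.mem_range] at hi
        simp only [Finset.mem_Ico]
        refine ⟨?_, hi.1⟩
        rcases Nat.eq_zero_or_pos i with rfl | h
        · exact absurd hi.2 (G.irrefl)
        · omega
      have hsubB1 : B.image (· + 1) ⊆ Finset.Ico 1 L := by
        intro m hm
        simp only [Finset.mem_image] at hm
        obtain ⟨i, hi, rfl⟩ := hm
        simp only [hBdef, Finset.mem_filter, Finset.mem_range] at hi
        simp only [Finset.mem_Ico]
        have hne' : i ≠ L - 1 := by
          rintro rfl
          exact G.irrefl hi.2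
        omega
      have hB1card : (B.image (· + 1)).card = B.card :=
        Finset.card_image_of_injective _ (add_left_injective 1)
      have hdisj : ¬ Disjoint A (B.image (· + 1)) := by
        intro hd
        have hun : (A ∪ B.image (· + 1)).card = A.card + (B.image (· + 1)).card :=
          Finset.card_union_of_disjoint hd
        have hsub : A ∪ B.image (· + 1) ⊆ Finset.Ico 1 L := Finset.union_subset hsubA hsubB1
        have hlec : (A ∪ B.image (· + 1)).card ≤ (Finset.Ico 1 L).card := Finset.card_le_card hsub
        rw [hun, Nat.card_Ico] at hlec
        have h1 := hlow (w 0)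
        have h2 := hlow (w (L - 1))
        omega
      obtain ⟨m, hmA, hmB⟩ := Finset.not_disjoint_iff.mp hdisj
      obtain ⟨jj, hjjB, hjj⟩ := Finset.mem_image.mp hmB
      subst hjj
      simp only [hAdef, Finset.mem_filter, Finset.mem_range] at hmA
      simp only [hBdef, Finset.mem_filter, Finset.mem_range] at hjjB
      have hj : jj + 1 < L := hmA.1
      have hA' : G.Adj (w 0) (w (jj + 1)) := hmA.2
      have hB' : G.Adj (w (L - 1)) (w jj) := hjjB.2
      by_cases hcross : ∃ x, x ∉ T ∧ ∃ t, t < L ∧ G.Adj x (cyc L jj w t)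
      · obtain ⟨x, hxT, t, ht, hadjx⟩ := hcross
        have hxa : ∀ a < L, x ≠ w a := by
          intro a ha he
          exact hxT ((hmemT x).mpr ⟨a, ha, he⟩)
        exact absurd ⟨_, rotate hw hj hA' hB' ht hxa hadjx⟩ hmax
      · push_neg at hcross
        have hclosed : ∀ y ∈ T, ∀ z, G.Adj y z → z ∈ T := by
          intro y hyT z hadj
          by_contra hzT
          obtain ⟨a, ha, rfl⟩ := (hmemT y).mp hyT
          obtain ⟨t, ht, hct⟩ := cyc_surj hj a ha
          exact hcross z hzT t ht (by rw [hct]; exact hadj.symm)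
        let G' : SimpleGraph {x : V // x ∉ T} := G.comap Subtype.val
        haveI : DecidableRel G'.Adj := Classical.decRel _
        have hcard' : Fintype.card {x : V // x ∉ T} = N - L := by
          rw [Fintype.card_subtype]
          have hfc : univ.filter (fun x : V => x ∉ T) = univ \ T := by
            ext y; simp
          rw [hfc, Finset.card_sdiff_of_subset (Finset.subset_univ T), Finset.card_univ, hTcard]
        have hdegpt : ∀ x : {x : V // x ∉ T}, G.degree (x : V) ≤ G'.degree x := by
          intro x
          have hsub : G.neighborFinset (x : V) ⊆ (G'.neighborFinset x).image Subtype.val := by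
            intro y hy
            rw [SimpleGraph.mem_neighborFinset] at hy
            have hyT : y ∉ T := by
              intro hyT
              exact x.2 (hclosed y hyT _ hy.symm)
            refine Finset.mem_image.mpr ⟨⟨y, hyT⟩, ?_, rfl⟩
            rw [SimpleGraph.mem_neighborFinset]
            exact hy
          calc G.degree (x : V) ≤ _ := Finset.card_le_card hsub
            _ = G'.degree x := Finset.card_image_of_injective _ Subtype.val_injective
        have hdegT : ∀ y ∈ T, G.degree y ≤ k := by
          intro y hyT
          have hsub : G.neighborFinset y ⊆ T.erase y := by
            intro z hz
            rw [SimpleGraph.mem_neighborFinset] at hz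
            exact Finset.mem_erase.mpr ⟨(G.ne_of_adj hz).symm, hclosed y hyT z hz⟩
          calc G.degree y ≤ (T.erase y).card := Finset.card_le_card hsub
            _ = L - 1 := by rw [Finset.card_erase_of_mem hyT, hTcard]
            _ ≤ k := by omega
        have hsumT : ∑ y ∈ T, G.degree y ≤ L * k := by
          calc ∑ y ∈ T, G.degree y ≤ ∑ _y ∈ T, k := Finset.sum_le_sum (fun y hy => hdegT y hy)
            _ = L * k := by rw [Finset.sum_const, hTcard, smul_eq_mul]
        have hfiltT : univ.filter (fun x : V => x ∈ T) = T := by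
          ext y; simp
        have hsplit := Finset.sum_filter_add_sum_filter_not univ (fun x : V => x ∈ T)
          (fun y => G.degree y)
        have hsplit' : (∑ y ∈ T, G.degree y)
            + (∑ y ∈ univ.filter (fun x : V => ¬ x ∈ T), G.degree y) = S1 := by
          rw [hS1, ← hsplit, hfiltT]
        have hsub1 : ∑ y ∈ univ.filter (fun x : V => ¬ x ∈ T), G.degree y
            = ∑ x : {x : V // x ∉ T}, G.degree (x : V) :=
          Finset.sum_subtype _ (by simp) _
        have hmono : ∑ x : {x : V // x ∉ T}, G.degree (x : V)
            ≤ ∑ x : {x : V // x ∉ T}, G'.degree x :=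
          Finset.sum_le_sum (fun x _ => hdegpt x)
        have hLN : L ≤ N := hPle L ⟨w, hw⟩
        have hprod : k * (N - L) + L * k = k * N := by
          have e : (N - L) + L = N := by omega
          calc k * (N - L) + L * k = k * ((N - L) + L) := by ring
            _ = k * N := by rw [e]
        have hgoal : k * Fintype.card {x : V // x ∉ T} < ∑ x : {x : V // x ∉ T}, G'.degree x := by
          rw [hcard']
          set q1 := k * (N - L) with hq1
          set q2 := L * k with hq2
          set q3 := k * N with hq3
          omega
        obtain ⟨w', hw'⟩ := ih _ k G' (by rw [hcard']; omega) hgoal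
        exact ⟨fun i => (w' i : V),
          fun i hi j hj he => hw'.1 i hi j hj (Subtype.ext he),
          fun i hi => hw'.2 i hi⟩

/-- **Erdős–Gallai**: a graph on `n` vertices with more than `k·n/2` edges
contains a path on `k + 2` vertices. -/
theorem stmt3 {V : Type*} [Fintype V] (k : ℕ) (G : SimpleGraph V)
    [DecidableRel G.Adj]
    (h : (k : ℝ) * (Fintype.card V : ℝ) / 2 < (G.edgeFinset.card : ℝ)) :
    ∃ v : Fin (k + 2) → V, Function.Injective v ∧
      ∀ i : Fin (k + 1), G.Adj (v i.castSucc) (v i.succ) := by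
  classical
  have h' : (k : ℝ) * (Fintype.card V : ℝ) < 2 * (G.edgeFinset.card : ℝ) := by
    rw [div_lt_iff₀ (by norm_num : (0 : ℝ) < 2)] at h
    linarith
  have h2 : k * Fintype.card V < 2 * G.edgeFinset.card := by exact_mod_cast h'
  have hdeg : k * Fintype.card V < ∑ x, G.degree x := by
    rw [SimpleGraph.sum_degrees_eq_twice_card_edges]
    exact h2
  obtain ⟨w, hw⟩ := aux (Fintype.card V) V k G le_rfl hdeg
  refine ⟨fun i => w i, ?_, ?_⟩
  · intro i j he
    exact Fin.ext (hw.1 i i.2 j j.2 he)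
  · intro i
    have hlt : (i : ℕ) + 1 < k + 2 := by
      have := i.2
      omega
    have := hw.2 i hlt
    simpa using this
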